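/- Let X be a real Banach space, let K : X×X → ℝ be a kernel satisfying conditions (1)–(5), and let f : X → ℝ ∪ {+∞} be proper, lower semicontinuous and bounded below. Then for every x ∈ X, I_{K,n}(I_{K,n} f)(x) → f(x) as n → ∞ (convergence in ℝ ∪ {+∞}); and if f : X → ℝ is real-valued and continuous, the convergence is uniform on every compact subset of X. -/

import Mathlib

open scoped BigOperators
open Filter

/-- The inf-convolution `I_{K,n} f (x) = inf_y ( f(y) + n K(x,y) )` for `f` with values
in `ℝ ∪ {+∞} ⊆ EReal`. -/
noncomputable def infConvK {X : Type*} [NormedAddCommGroup X]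
    (K : X → X → ℝ) (f : X → EReal) (n : ℕ) (x : X) : EReal :=
  ⨅ y, f y + (((n : ℝ) * K x y : ℝ) : EReal)

lemma ereal_iInf_coe {ι : Sort*} [Nonempty ι] (h : ι → ℝ) (m : ℝ) (hm : ∀ i, m ≤ h i) :
    (⨅ i, ((h i : ℝ) : EReal)) = ((⨅ i, h i : ℝ) : EReal) := by
  have hbdd : BddBelow (Set.range h) := ⟨m, by rintro _ ⟨i, rfl⟩; exact hm i⟩
  refine le_antisymm ?_ (le_iInf fun i => EReal.coe_le_coe_iff.2 (ciInf_le hbdd i))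
  set b : EReal := ⨅ i, ((h i : ℝ) : EReal) with hb
  have hbot : (m : EReal) ≤ b := le_iInf fun i => EReal.coe_le_coe_iff.2 (hm i)
  have hne : b ≠ ⊥ := fun h' => by simp [h'] at hbot
  have hne' : b ≠ ⊤ := by
    intro h'
    have := iInf_le (fun i => ((h i : ℝ) : EReal)) (Classical.arbitrary ι)
    rw [← hb, h'] at this
    exact (EReal.coe_lt_top _).not_ge this
  have hbe : ((b.toReal : ℝ) : EReal) = b := EReal.coe_toReal hne' hne
  rw [← hbe, EReal.coe_le_coe_iff]
  refine le_ciInf fun i => ?_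
  have : b ≤ ((h i : ℝ) : EReal) := iInf_le _ i
  rw [← hbe] at this
  exact EReal.coe_le_coe_iff.1 this

section
variable {X : Type*} [NormedAddCommGroup X] (K : X → X → ℝ) (f : X → EReal)

lemma infConvK_le_self (hK0 : ∀ x, K x x = 0) (n : ℕ) (x : X) :
    infConvK K f n x ≤ f x := by
  refine iInf_le_of_le x ?_
  rw [hK0 x]
  simp

lemma le_infConvK (hKnn : ∀ x y, 0 ≤ K x y) (m : ℝ) (hm : ∀ y, (m : EReal) ≤ f y)
    (n : ℕ) (x : X) : (m : EReal) ≤ infConvK K f n x := by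
  refine le_iInf fun y => ?_
  calc (m : EReal) = (m : EReal) + 0 := by rw [add_zero]
    _ ≤ f y + (((n : ℝ) * K x y : ℝ) : EReal) := by
        refine add_le_add (hm y) ?_
        exact_mod_cast mul_nonneg (Nat.cast_nonneg n) (hKnn x y)

lemma infConvK_mono (hKnn : ∀ x y, 0 ≤ K x y) {f' : X → EReal} (hf : ∀ y, f y ≤ f' y)
    {n n' : ℕ} (hn : n ≤ n') (x : X) : infConvK K f n x ≤ infConvK K f' n' x := by
  refine iInf_mono fun y => add_le_add (hf y) ?_
  refine EReal.coe_le_coe_iff.2 ?_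
  exact mul_le_mul_of_nonneg_right (by exact_mod_cast hn) (hKnn x y)

end

lemma er_add_ge {b : EReal} {a p q c : ℝ} (hb : (p : EReal) ≤ b) (hc : q ≤ c)
    (h : a ≤ p + q) : (a : EReal) ≤ b + (c : ℝ) := by
  calc (a : EReal) ≤ ((p + q : ℝ) : EReal) := EReal.coe_le_coe_iff.2 h
    _ = (p : EReal) + (q : ℝ) := EReal.coe_add p q
    _ ≤ b + (c : ℝ) := add_le_add hb (EReal.coe_le_coe_iff.2 hc)

lemma key_lower {X : Type*} [NormedAddCommGroup X]
    (K : X → X → ℝ)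
    (hK1 : (∀ x y : X, 0 ≤ K x y) ∧ ∀ x : X, K x x = 0)
    (hK3 : ∀ r M : ℝ, 0 < r → 0 < M → ∃ R : ℝ, ∀ x y : X, ‖x‖ ≤ r → R ≤ ‖y‖ → M ≤ K x y)
    (hK4 : ∀ s : Set (X × X), Bornology.IsBounded s →
      UniformContinuousOn (fun q : X × X => K q.1 q.2) s)
    (hK5 : ∀ x₀ : X, ∀ δ : ℝ, 0 < δ → ∃ C : ℝ, 0 < C ∧ ∀ y : X, δ ≤ ‖x₀ - y‖ → C ≤ K x₀ y)
    (f : X → EReal) (m : ℝ) (hm : ∀ y, (m : EReal) ≤ f y)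
    (hlsc : LowerSemicontinuous f) (x : X) (a : ℝ) (ha : (a : EReal) < f x) :
    ∀ᶠ n : ℕ in atTop, (a : EReal) ≤ infConvK K (fun y => infConvK K f n y) n x := by
  obtain ⟨δ, hδ, hball⟩ : ∃ δ > 0, ∀ y, dist y x < δ → (a : EReal) < f y := by
    have := hlsc x a ha
    rw [Metric.eventually_nhds_iff] at this
    obtain ⟨ε, hε, h⟩ := this
    exact ⟨ε, hε, fun y hy => h hy⟩
  obtain ⟨C₂, hC₂, hC₂K⟩ := hK5 x (δ / 4) (by linarith)
  set r : ℝ := ‖x‖ + δ + 1 with hr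
  have hrpos : 0 < r := by positivity
  obtain ⟨R, hR⟩ := hK3 r C₂ hrpos hC₂
  set R' : ℝ := |R| + r + 1 with hR'
  set s : Set (X × X) := Metric.closedBall (0 : X) r ×ˢ Metric.closedBall (0 : X) R' with hs
  have hsb : Bornology.IsBounded s :=
    (Metric.isBounded_closedBall).prod (Metric.isBounded_closedBall)
  obtain ⟨η, hη, hUC⟩ := (Metric.uniformContinuousOn_iff).1 (hK4 s hsb) (C₂ / 2) (by linarith)
  set τ : ℝ := min (δ / 4) (η / 2) with hτ
  have hτpos : 0 < τ := lt_min (by linarith) (by linarith)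
  obtain ⟨C₁, hC₁, hC₁K⟩ := hK5 x τ hτpos
  set C : ℝ := min C₁ (C₂ / 2) with hC
  have hCpos : 0 < C := lt_min hC₁ (by linarith)
  have hxmem : ‖x‖ ≤ r := by rw [hr]; linarith
  filter_upwards [eventually_ge_atTop ⌈(a - m) / C⌉₊] with n hn
  have hnC : a ≤ m + (n : ℝ) * C := by
    have h1 : (a - m) / C ≤ (n : ℝ) := le_trans (Nat.le_ceil _) (by exact_mod_cast hn)
    have := (div_le_iff₀ hCpos).1 h1
    linarith
  have hinner_m : ∀ z, (m : EReal) ≤ infConvK K f n z := by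
    intro z
    refine le_iInf fun y => ?_
    calc (m : EReal) = (m : EReal) + 0 := (add_zero _).symm
      _ ≤ f y + (((n : ℝ) * K z y : ℝ) : EReal) := by
          refine add_le_add (hm y) ?_
          exact_mod_cast mul_nonneg (Nat.cast_nonneg n) (hK1.1 z y)
  refine le_iInf fun z => ?_
  rcases le_or_gt τ ‖x - z‖ with hz | hz
  · have hKxz : C₁ ≤ K x z := hC₁K z hz
    refine er_add_ge (hinner_m z) ?_ hnC
    have : (n : ℝ) * C ≤ (n : ℝ) * K x z :=
      mul_le_mul_of_nonneg_left (le_trans (min_le_left _ _) hKxz) (Nat.cast_nonneg n)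
    linarith
  · have hz_norm : ‖z‖ ≤ r := by
      have : ‖z‖ ≤ ‖x‖ + ‖x - z‖ := by
        simpa [sub_sub_cancel] using norm_sub_le x (x - z)
      have hτδ : τ ≤ δ / 4 := min_le_left _ _
      rw [hr]; linarith
    have hinner : (a : EReal) ≤ infConvK K f n z := by
      refine le_iInf fun y => ?_
      rcases lt_or_ge (dist y x) δ with hy | hy
      · calc (a : EReal) = (a : EReal) + 0 := (add_zero _).symm
          _ ≤ f y + (((n : ℝ) * K z y : ℝ) : EReal) := by
              refine add_le_add (le_of_lt (hball y hy)) ?_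
              exact_mod_cast mul_nonneg (Nat.cast_nonneg n) (hK1.1 z y)
      · have hCzy : C ≤ K z y := by
          rcases le_or_gt R ‖y‖ with hyR | hyR
          · exact le_trans (le_trans (min_le_right _ _) (by linarith)) (hR z y hz_norm hyR)
          · have hymem : ‖y‖ ≤ R' := by
              rw [hR']
              have : R ≤ |R| := le_abs_self R
              linarith
            have hp : (z, y) ∈ s := by
              constructor <;> simp [Metric.mem_closedBall, dist_zero_right, hz_norm, hymem]
            have hq : (x, y) ∈ s := by
              constructor <;> simp [Metric.mem_closedBall, dist_zero_right, hxmem, hymem]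
            have hd : dist ((z, y) : X × X) (x, y) < η := by
              rw [Prod.dist_eq]
              simp only [dist_self]
              rw [max_eq_left dist_nonneg]
              calc dist z x = ‖x - z‖ := by rw [dist_comm, dist_eq_norm]
                _ < τ := hz
                _ ≤ η / 2 := min_le_right _ _
                _ < η := by linarith
            have hK' := hUC _ hp _ hq hd
            have hKxy : C₂ ≤ K x y := by
              refine hC₂K y ?_
              rw [dist_eq_norm] at hy
              rw [← norm_neg]
              simp only [neg_sub]
              calc δ / 4 ≤ δ := by linarith
                _ ≤ ‖y - x‖ := hy
            rw [Real.dist_eq] at hK'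
            have : |K z y - K x y| < C₂ / 2 := hK'
            have h2 : K x y - C₂ / 2 ≤ K z y := by
              cases' abs_lt.1 this with h3 h4
              linarith
            calc C ≤ C₂ / 2 := min_le_right _ _
              _ ≤ K z y := by linarith
        refine er_add_ge (hm y) ?_ hnC
        exact mul_le_mul_of_nonneg_left hCzy (Nat.cast_nonneg n)
    calc (a : EReal) = (a : EReal) + 0 := (add_zero _).symm
      _ ≤ infConvK K f n z + (((n : ℝ) * K x z : ℝ) : EReal) := by
          refine add_le_add hinner ?_
          exact_mod_cast mul_nonneg (Nat.cast_nonneg n) (hK1.1 x z)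

lemma conv_continuous {X : Type*} [NormedAddCommGroup X]
    (K : X → X → ℝ)
    (hKnn : ∀ x y : X, 0 ≤ K x y) (hK0 : ∀ x : X, K x x = 0)
    (hK3 : ∀ r M : ℝ, 0 < r → 0 < M → ∃ R : ℝ, ∀ x y : X, ‖x‖ ≤ r → R ≤ ‖y‖ → M ≤ K x y)
    (hK4 : ∀ s : Set (X × X), Bornology.IsBounded s →
      UniformContinuousOn (fun q : X × X => K q.1 q.2) s)
    (ψ : X → ℝ) (m : ℝ) (hm : ∀ z, m ≤ ψ z) (n : ℕ) :
    Continuous (fun x => ⨅ y, (ψ y + (n : ℝ) * K x y)) := by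
  rcases Nat.eq_zero_or_pos n with hn0 | hnpos
  · subst hn0
    simp only [Nat.cast_zero, zero_mul, add_zero]
    exact continuous_const
  have hn : (0 : ℝ) < n := by exact_mod_cast hnpos
  set F : X → ℝ := fun x => ⨅ y, (ψ y + (n : ℝ) * K x y) with hF
  have hbdd : ∀ x : X, BddBelow (Set.range fun y => ψ y + (n : ℝ) * K x y) := by
    intro x
    refine ⟨m, ?_⟩
    rintro _ ⟨y, rfl⟩
    have := mul_nonneg (le_of_lt hn) (hKnn x y)
    have := hm y
    dsimp; linarith
  have hFle : ∀ x z, F x ≤ ψ z + (n : ℝ) * K x z := fun x z => ciInf_le (hbdd x) z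
  have hFm : ∀ x, m ≤ F x := fun x => le_ciInf fun y => by
    have := mul_nonneg (le_of_lt hn) (hKnn x y); have := hm y; linarith
  rw [continuous_iff_continuousAt]
  intro x₀
  rw [Metric.continuousAt_iff]
  intro ε hε
  set ε' : ℝ := ε / 8 with hε'
  have hε'pos : 0 < ε' := by positivity
  obtain ⟨η₀', hη₀', hUC₀⟩ := (Metric.uniformContinuousOn_iff).1
    (hK4 (Metric.closedBall x₀ 1 ×ˢ Metric.closedBall x₀ 1)
      ((Metric.isBounded_closedBall).prod Metric.isBounded_closedBall)) 1 one_pos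
  set η₀ : ℝ := min η₀' 1 with hη₀def
  have hη₀ : 0 < η₀ := lt_min hη₀' one_pos
  have hKx : ∀ x : X, dist x x₀ < η₀ → K x x₀ ≤ 1 := by
    intro x hx
    have hx1 : dist x x₀ ≤ 1 := le_of_lt (lt_of_lt_of_le hx (min_le_right _ _))
    have hp : ((x, x₀) : X × X) ∈ Metric.closedBall x₀ 1 ×ˢ Metric.closedBall x₀ 1 :=
      ⟨by simpa [Metric.mem_closedBall] using hx1, by simp [Metric.mem_closedBall]⟩
    have hq : ((x₀, x₀) : X × X) ∈ Metric.closedBall x₀ 1 ×ˢ Metric.closedBall x₀ 1 :=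
      ⟨by simp [Metric.mem_closedBall], by simp [Metric.mem_closedBall]⟩
    have hd : dist ((x, x₀) : X × X) (x₀, x₀) < η₀' := by
      rw [Prod.dist_eq]
      simp only [dist_self]
      rw [max_eq_left dist_nonneg]
      exact lt_of_lt_of_le hx (min_le_left _ _)
    have := hUC₀ _ hp _ hq hd
    rw [Real.dist_eq, hK0 x₀, sub_zero, abs_of_nonneg (hKnn x x₀)] at this
    linarith
  set b : ℝ := ψ x₀ + n with hb
  have hFb : ∀ x : X, dist x x₀ < η₀ → F x ≤ b := by
    intro x hx
    calc F x ≤ ψ x₀ + (n : ℝ) * K x x₀ := hFle x x₀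
      _ ≤ ψ x₀ + n * 1 := by
          have := mul_le_mul_of_nonneg_left (hKx x hx) (le_of_lt hn); linarith
      _ = b := by rw [hb]; ring
  set M : ℝ := (b + ε' - m) / n + 1 with hM
  have hbm : m ≤ b := le_trans (hFm x₀) (hFb x₀ (by simpa using hη₀))
  have hMpos : 0 < M := by
    have h0 : 0 ≤ (b + ε' - m) / (n : ℝ) := div_nonneg (by linarith) (le_of_lt hn)
    rw [hM]; linarith
  set r : ℝ := ‖x₀‖ + 1 with hrdef
  have hrpos : 0 < r := by positivity
  obtain ⟨R, hR⟩ := hK3 r M hrpos hMpos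
  set R' : ℝ := |R| + 1 with hR'def
  obtain ⟨η₁, hη₁, hUC₁⟩ := (Metric.uniformContinuousOn_iff).1
    (hK4 (Metric.closedBall (0 : X) r ×ˢ Metric.closedBall (0 : X) R')
      ((Metric.isBounded_closedBall).prod Metric.isBounded_closedBall)) (ε' / n)
      (by positivity)
  set η : ℝ := min η₀ (η₁ / 2) with hηdef
  have hηpos : 0 < η := lt_min hη₀ (by linarith)
  have main : ∀ x x' : X, dist x x₀ < η → dist x' x₀ < η → F x' ≤ F x + 2 * ε' := by
    intro x x' hx hx'
    have hxη₀ : dist x x₀ < η₀ := lt_of_lt_of_le hx (min_le_left _ _)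
    have hx'η₀ : dist x' x₀ < η₀ := lt_of_lt_of_le hx' (min_le_left _ _)
    obtain ⟨y, hy⟩ : ∃ y, ψ y + (n : ℝ) * K x y < F x + ε' :=
      exists_lt_of_ciInf_lt (by linarith [hFm x])
    have hxr : ‖x‖ ≤ r := by
      have h1 : dist x x₀ ≤ 1 := le_of_lt (lt_of_lt_of_le hxη₀ (min_le_right _ _))
      have h2 : ‖x‖ ≤ ‖x₀‖ + dist x x₀ := by
        rw [dist_eq_norm]
        simpa using norm_add_le x₀ (x - x₀)
      rw [hrdef]; linarith
    have hx'r : ‖x'‖ ≤ r := by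
      have h1 : dist x' x₀ ≤ 1 := le_of_lt (lt_of_lt_of_le hx'η₀ (min_le_right _ _))
      have h2 : ‖x'‖ ≤ ‖x₀‖ + dist x' x₀ := by
        rw [dist_eq_norm]
        simpa using norm_add_le x₀ (x' - x₀)
      rw [hrdef]; linarith
    have hyR : ‖y‖ < R := by
      by_contra hcon
      push_neg at hcon
      have hKy := hR x y hxr hcon
      have h1 : (n : ℝ) * M ≤ (n : ℝ) * K x y :=
        mul_le_mul_of_nonneg_left hKy (le_of_lt hn)
      have h2 : (n : ℝ) * M = b + ε' - m + n := by
        rw [hM, mul_add, mul_one, mul_div_cancel₀ _ (ne_of_gt hn)]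
      have h3 : F x + ε' ≤ b + ε' := by linarith [hFb x hxη₀]
      have h4 := hm y
      linarith
    have hymem : ‖y‖ ≤ R' := by
      rw [hR'def]; have := le_abs_self R; linarith
    have hp : ((x', y) : X × X) ∈ Metric.closedBall (0 : X) r ×ˢ Metric.closedBall (0 : X) R' :=
      ⟨by simpa [Metric.mem_closedBall, dist_zero_right] using hx'r,
       by simpa [Metric.mem_closedBall, dist_zero_right] using hymem⟩
    have hq : ((x, y) : X × X) ∈ Metric.closedBall (0 : X) r ×ˢ Metric.closedBall (0 : X) R' :=
      ⟨by simpa [Metric.mem_closedBall, dist_zero_right] using hxr,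
       by simpa [Metric.mem_closedBall, dist_zero_right] using hymem⟩
    have hd : dist ((x', y) : X × X) (x, y) < η₁ := by
      rw [Prod.dist_eq]
      simp only [dist_self]
      rw [max_eq_left dist_nonneg]
      calc dist x' x ≤ dist x' x₀ + dist x₀ x := dist_triangle _ _ _
        _ < η + η := by rw [dist_comm x₀ x]; exact add_lt_add hx' hx
        _ ≤ η₁ / 2 + η₁ / 2 := by
            have := min_le_right η₀ (η₁ / 2); rw [hηdef] at *
            exact add_le_add (min_le_right _ _) (min_le_right _ _)
        _ = η₁ := by ring
    have hK' := hUC₁ _ hp _ hq hd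
    rw [Real.dist_eq] at hK'
    have h5 : K x' y ≤ K x y + ε' / n := by
      cases' abs_lt.1 hK' with h3 h4; linarith
    calc F x' ≤ ψ y + (n : ℝ) * K x' y := hFle x' y
      _ ≤ ψ y + (n : ℝ) * (K x y + ε' / n) :=
          by have := mul_le_mul_of_nonneg_left h5 (le_of_lt hn); linarith
      _ = ψ y + (n : ℝ) * K x y + ε' := by
          rw [mul_add, mul_div_cancel₀ _ (ne_of_gt hn)]; ring
      _ ≤ F x + 2 * ε' := by linarith
  refine ⟨η, hηpos, fun {x} hx => ?_⟩
  have h1 := main x₀ x (by simpa using hηpos) hx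
  have h2 := main x x₀ hx (by simpa using hηpos)
  rw [Real.dist_eq]
  rw [abs_lt]
  constructor <;> [skip; skip] <;> rw [hε'] at h1 h2 <;> [linarith; linarith]

lemma dini_mono {X : Type*} [MetricSpace X] {s : Set X} (hs : IsCompact s)
    (F : ℕ → X → ℝ) (g : X → ℝ)
    (hFc : ∀ n, Continuous (F n)) (hgc : Continuous g)
    (hmono : ∀ n x, F n x ≤ F (n + 1) x)
    (hle : ∀ n x, F n x ≤ g x)
    (hpt : ∀ x ∈ s, Tendsto (fun n => F n x) atTop (nhds (g x))) :
    TendstoUniformlyOn F g atTop s := by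
  rw [Metric.tendstoUniformlyOn_iff]
  intro ε hε
  have hmono' : ∀ x : X, Monotone fun n => F n x := fun x =>
    monotone_nat_of_le_succ fun n => hmono n x
  have hsel : ∀ x : s, ∃ N : ℕ, g (x : X) - F N (x : X) < ε / 2 := by
    rintro ⟨x, hx⟩
    obtain ⟨N, hN⟩ := (Metric.tendsto_atTop.1 (hpt x hx)) (ε / 2) (by linarith)
    refine ⟨N, ?_⟩
    have := hN N le_rfl
    rw [Real.dist_eq, abs_lt] at this
    linarith [this.2]
  choose N hN using hsel
  set U : s → Set X := fun i => (fun y => g y - F (N i) y) ⁻¹' Set.Iio (ε / 2) with hU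
  have hUopen : ∀ i, IsOpen (U i) :=
    fun i => (isOpen_Iio).preimage (hgc.sub (hFc (N i)))
  have hcover : s ⊆ ⋃ i, U i := by
    intro x hx
    exact Set.mem_iUnion.2 ⟨⟨x, hx⟩, hN ⟨x, hx⟩⟩
  obtain ⟨t, ht⟩ := hs.elim_finite_subcover U hUopen hcover
  set N₀ : ℕ := t.sup N with hN₀
  filter_upwards [eventually_ge_atTop N₀] with n hn
  intro x hx
  obtain ⟨i, hit, hxi⟩ : ∃ i ∈ t, x ∈ U i := by
    have := ht hx
    rw [Set.mem_iUnion₂] at this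
    obtain ⟨i, hi, h⟩ := this
    exact ⟨i, hi, h⟩
  have h1 : g x - F (N i) x < ε / 2 := hxi
  have h2 : F (N i) x ≤ F n x := hmono' x (le_trans (Finset.le_sup hit) hn)
  have h3 : F n x ≤ g x := hle n x
  rw [Real.dist_eq, abs_of_nonneg (by linarith)]
  linarith

/-- Let `K` be a kernel satisfying conditions (1)–(5) and let `f` be proper,
lower semicontinuous and bounded below. Then `I_{K,n}(I_{K,n} f) → f` pointwise
(in `ℝ ∪ {+∞}`), and uniformly on compact sets when `f` is real-valued and continuous. -/
theorem stmt_8 {X : Type*} [NormedAddCommGroup X] [NormedSpace ℝ X] [CompleteSpace X]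
    (K : X → X → ℝ)
    (hK1 : (∀ x y : X, 0 ≤ K x y) ∧ ∀ x : X, K x x = 0)
    (hK2 : ∀ x y : X, K x y = K y x)
    (hK3 : ∀ r M : ℝ, 0 < r → 0 < M → ∃ R : ℝ, ∀ x y : X, ‖x‖ ≤ r → R ≤ ‖y‖ → M ≤ K x y)
    (hK4 : ∀ s : Set (X × X), Bornology.IsBounded s →
      UniformContinuousOn (fun q : X × X => K q.1 q.2) s)
    (hK5 : ∀ x₀ : X, ∀ δ : ℝ, 0 < δ → ∃ C : ℝ, 0 < C ∧ ∀ y : X, δ ≤ ‖x₀ - y‖ → C ≤ K x₀ y)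
    (f : X → EReal)
    (hproper : ∃ x, f x ≠ ⊤)
    (hlsc : LowerSemicontinuous f)
    (hbdd : ∃ m : ℝ, ∀ x, (m : EReal) ≤ f x) :
    (∀ x : X, Filter.Tendsto
        (fun n : ℕ => infConvK K (fun y => infConvK K f n y) n x)
        Filter.atTop (nhds (f x))) ∧
    (∀ g : X → ℝ, Continuous g → (∀ x, f x = (g x : EReal)) →
      ∀ s : Set X, IsCompact s →
        TendstoUniformlyOn
          (fun (n : ℕ) (x : X) => (infConvK K (fun y => infConvK K f n y) n x).toReal)
          g Filter.atTop s) := by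
  obtain ⟨m, hm⟩ := hbdd
  have hupper : ∀ (n : ℕ) (x : X),
      infConvK K (fun y => infConvK K f n y) n x ≤ f x := fun n x =>
    le_trans (infConvK_le_self K (fun y => infConvK K f n y) hK1.2 n x)
      (infConvK_le_self K f hK1.2 n x)
  have hpart1 : ∀ x : X, Filter.Tendsto
      (fun n : ℕ => infConvK K (fun y => infConvK K f n y) n x)
      Filter.atTop (nhds (f x)) := by
    intro x
    rw [tendsto_order]
    constructor
    · intro b hb
      obtain ⟨a, hba, haf⟩ := EReal.exists_between_coe_real hb
      filter_upwards [key_lower K hK1 hK3 hK4 hK5 f m hm hlsc x a haf] with n h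
      exact lt_of_lt_of_le hba h
    · intro b hb
      exact Filter.Eventually.of_forall fun n => lt_of_le_of_lt (hupper n x) hb
  refine ⟨hpart1, ?_⟩
  intro g hgc hfg s hs
  have hmg : ∀ z, m ≤ g z := fun z => by
    have := hm z; rw [hfg z] at this; exact_mod_cast this
  -- real-valued inf-convolutions
  set F₁ : ℕ → X → ℝ := fun n z => ⨅ y, (g y + (n : ℝ) * K z y) with hF₁
  set F₂ : ℕ → X → ℝ := fun n x => ⨅ z, (F₁ n z + (n : ℝ) * K x z) with hF₂
  have hbridge1 : ∀ (n : ℕ) (z : X), infConvK K f n z = ((F₁ n z : ℝ) : EReal) := by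
    intro n z
    unfold infConvK
    have h1 : ∀ y : X, f y + (((n : ℝ) * K z y : ℝ) : EReal)
        = (((g y + (n : ℝ) * K z y : ℝ)) : EReal) := by
      intro y
      rw [hfg y, ← EReal.coe_add]
    rw [iInf_congr h1]
    exact ereal_iInf_coe _ m fun y => by
      have := mul_nonneg (Nat.cast_nonneg (α := ℝ) n) (hK1.1 z y)
      have := hmg y; linarith
  have hm1 : ∀ (n : ℕ) (z : X), m ≤ F₁ n z := by
    intro n z
    have := le_infConvK K f hK1.1 m hm n z
    rw [hbridge1 n z] at this
    exact_mod_cast this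
  have hbridge2 : ∀ (n : ℕ) (x : X),
      infConvK K (fun y => infConvK K f n y) n x = ((F₂ n x : ℝ) : EReal) := by
    intro n x
    have he : (fun y => infConvK K f n y) = fun y => ((F₁ n y : ℝ) : EReal) :=
      funext fun y => hbridge1 n y
    rw [he]
    unfold infConvK
    have h1 : ∀ z : X, ((F₁ n z : ℝ) : EReal) + (((n : ℝ) * K x z : ℝ) : EReal)
        = (((F₁ n z + (n : ℝ) * K x z : ℝ)) : EReal) := fun z => (EReal.coe_add _ _).symm
    rw [iInf_congr h1]
    exact ereal_iInf_coe _ m fun z => by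
      have := mul_nonneg (Nat.cast_nonneg (α := ℝ) n) (hK1.1 x z)
      have := hm1 n z; linarith
  have hclean : (fun (n : ℕ) (x : X) =>
      (infConvK K (fun y => infConvK K f n y) n x).toReal) = fun n x => F₂ n x := by
    funext n x
    rw [hbridge2 n x, EReal.toReal_coe]
  rw [hclean]
  -- apply Dini's theorem
  refine dini_mono hs F₂ g ?_ hgc ?_ ?_ ?_
  · intro n
    exact conv_continuous K hK1.1 hK1.2 hK3 hK4 (F₁ n) m (hm1 n) n
  · intro n x
    have h := infConvK_mono K (fun y => infConvK K f n y)
      hK1.1 (f' := fun y => infConvK K f (n + 1) y)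
      (fun y => infConvK_mono K f hK1.1 (fun _ => le_rfl) (Nat.le_succ n) y)
      (Nat.le_succ n) x
    rw [hbridge2 n x, hbridge2 (n + 1) x] at h
    exact_mod_cast h
  · intro n x
    have h := hupper n x
    rw [hbridge2 n x, hfg x] at h
    exact_mod_cast h
  · intro x _
    have h := hpart1 x
    rw [hfg x] at h
    have h2 : Filter.Tendsto
        (fun n : ℕ => (infConvK K (fun y => infConvK K f n y) n x).toReal)
        Filter.atTop (nhds (g x)) := by
      have hcont := EReal.tendsto_toReal (a := ((g x : ℝ) : EReal))
        (by simp) (by simp)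
      have := hcont.comp h
      simpa [Function.comp_def] using this
    have h3 : (fun n : ℕ => (infConvK K (fun y => infConvK K f n y) n x).toReal)
        = fun n => F₂ n x := funext fun n => by rw [hbridge2 n x, EReal.toReal_coe]
    rwa [h3] at h2
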